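/- arXiv:1406.2752 — 2 statements merged into one kernel-verified Lean document; each statement's English description precedes it below -/
import Mathlib

section
/- In a fully-loaded two-tier network (association probabilities A_{D,m}+A_{D,s}=1), the overall DL coverage P̄_D(x) = A_m(x)·P_m(x) + A_s(x)·P_s(x), viewed as a function of the density ratio x = λ_s/λ_m with each per-tier coverage of the form a_i/(a_i + c_i·x_i) (x_m relative weight of cross/own interference), attains its maximum at x* = (q_m P_m^{2/α}δ(γ_m,α) + (1-q_m)(Q_mγ_m)^{2/α}C(α)) / (B̂^{2/α}(q_s P_s^{2/α}δ(γ_s,α) + (1-q_s)C(α)(Q_sγ_s)^{2/α})), obtained by solving dP̄_D/dx = 0. -/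
open Real MeasureTheory

lemma key_ineq (a b t : ℝ) (ha : 0 < a) (hb : 0 < b) (ht0 : 0 ≤ t) (ht1 : t ≤ 1) :
    (1 - t) / (a * (1 - t) + 1) + t / (b * t + 1) ≤ (a + b) / (a * b + a + b) := by
  have h1 : 0 < a * (1 - t) + 1 := by nlinarith
  have h2 : 0 < b * t + 1 := by nlinarith
  have h3 : 0 < a * b + a + b := by nlinarith
  rw [div_add_div _ _ (ne_of_gt h1) (ne_of_gt h2), div_le_div_iff₀ (by positivity) h3]
  nlinarith [sq_nonneg ((a+b)*(1-t) - b), mul_pos ha hb]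

/-- Overall coverage as a function of the density ratio, with all the
rpow quantities abstracted as plain real parameters. -/
noncomputable def auxF (qm qs dm ds C km ks R1 R2 : ℝ) (y : ℝ) : ℝ :=
  qm / (qm + qs * y * R1) *
      (qm / (qm * (qm / (qm + qs * y * R1)) * dm +
        (1 - qm) * (qm / (qm + qs * y * R1)) * C * km + qm)) +
    qs * y / (qs * y + qm * R2) *
      (qs / (qs * (qs * y / (qs * y + qm * R2)) * ds +
        (1 - qs) * (qs * y / (qs * y + qm * R2)) * C * ks + qs))

set_option maxHeartbeats 1000000 in
lemma aux (qm qs dm ds C km ks R1 R2 xst : ℝ)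
    (hqm0 : 0 < qm) (hqm1 : qm < 1) (hqs0 : 0 < qs) (hqs1 : qs < 1)
    (hdm : 0 ≤ dm) (hds : 0 ≤ ds) (hC : 0 < C) (hkm : 0 < km) (hks : 0 < ks)
    (hR1 : 0 < R1) (hR12 : R1 * R2 = 1)
    (hxst : xst = (qm*dm + (1-qm)*C*km) / (R1 * (qs*ds + (1-qs)*C*ks)))
    (x : ℝ) (hx : 0 < x) :
    auxF qm qs dm ds C km ks R1 R2 x ≤ auxF qm qs dm ds C km ks R1 R2 xst := by
  have hR2eq : R2 = 1 / R1 := by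
    rw [eq_div_iff (ne_of_gt hR1), mul_comm]
    exact hR12
  obtain ⟨Dm, hDmdef⟩ : ∃ d : ℝ, d = qm*dm + (1-qm)*C*km := ⟨_, rfl⟩
  obtain ⟨Ds, hDsdef⟩ : ∃ d : ℝ, d = qs*ds + (1-qs)*C*ks := ⟨_, rfl⟩
  rw [← hDmdef, ← hDsdef] at hxst
  have hDm : 0 < Dm := by
    rw [hDmdef]
    have h1 : 0 ≤ qm*dm := mul_nonneg hqm0.le hdm
    have h2 : 0 < (1-qm)*C*km := mul_pos (mul_pos (by linarith) hC) hkm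
    linarith
  have hDs : 0 < Ds := by
    rw [hDsdef]
    have h1 : 0 ≤ qs*ds := mul_nonneg hqs0.le hds
    have h2 : 0 < (1-qs)*C*ks := mul_pos (mul_pos (by linarith) hC) hks
    linarith
  obtain ⟨a, hadef⟩ : ∃ u : ℝ, u = Dm/qm := ⟨_, rfl⟩
  obtain ⟨b, hbdef⟩ : ∃ u : ℝ, u = Ds/qs := ⟨_, rfl⟩
  have ha : 0 < a := by rw [hadef]; positivity
  have hb : 0 < b := by rw [hbdef]; positivity
  obtain ⟨T, hTdef⟩ : ∃ f : ℝ → ℝ, f = fun y => qs*y*R1/(qm + qs*y*R1) := ⟨_, rfl⟩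
  have hT01 : ∀ y : ℝ, 0 < y → 0 ≤ T y ∧ T y ≤ 1 := by
    intro y hy
    have hden : 0 < qm + qs*y*R1 := by positivity
    refine ⟨by simp only [hTdef]; positivity, ?_⟩
    simp only [hTdef]
    rw [div_le_one hden]
    linarith
  have hG : ∀ y : ℝ, 0 < y → auxF qm qs dm ds C km ks R1 R2 y
      = (1 - T y)/(a*(1 - T y)+1) + T y/(b*T y+1) := by
    intro y hy
    have hden : 0 < qm + qs*y*R1 := by positivity
    have hAm : qm/(qm + qs*y*R1) = 1 - T y := by
      simp only [hTdef]
      field_simp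
      ring
    have hAs : qs*y/(qs*y + qm*R2) = T y := by
      rw [hR2eq]
      simp only [hTdef]
      have hden2 : 0 < qs*y + qm*(1/R1) := by positivity
      rw [div_eq_div_iff (ne_of_gt hden2) (ne_of_gt hden)]
      field_simp
      ring
    have ht0 := (hT01 y hy).1
    have ht1 := (hT01 y hy).2
    have hd1 : 0 < qm*(1 - T y)*dm + (1-qm)*(1 - T y)*C*km + qm := by
      have h1 : 0 ≤ qm*(1 - T y)*dm :=
        mul_nonneg (mul_nonneg hqm0.le (by linarith)) hdm
      have h2 : 0 ≤ (1-qm)*(1 - T y)*C*km :=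
        mul_nonneg (mul_nonneg (mul_nonneg (by linarith) (by linarith)) hC.le) hkm.le
      linarith
    have hd2 : 0 < qs*(T y)*ds + (1-qs)*(T y)*C*ks + qs := by
      have h1 : 0 ≤ qs*(T y)*ds :=
        mul_nonneg (mul_nonneg hqs0.le ht0) hds
      have h2 : 0 ≤ (1-qs)*(T y)*C*ks :=
        mul_nonneg (mul_nonneg (mul_nonneg (by linarith) ht0) hC.le) hks.le
      linarith
    have ha1 : 0 < a*(1 - T y)+1 := by nlinarith
    have hb1 : 0 < b*(T y)+1 := by nlinarith
    have e1 : (1 - T y) * (qm / (qm*(1 - T y)*dm + (1-qm)*(1 - T y)*C*km + qm))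
        = (1 - T y)/(a*(1 - T y)+1) := by
      rw [← mul_div_assoc, div_eq_div_iff (ne_of_gt hd1) (ne_of_gt ha1),
        hadef, hDmdef]
      field_simp
    have e2 : T y * (qs / (qs*(T y)*ds + (1-qs)*(T y)*C*ks + qs))
        = T y/(b*(T y)+1) := by
      rw [← mul_div_assoc, div_eq_div_iff (ne_of_gt hd2) (ne_of_gt hb1),
        hbdef, hDsdef]
      field_simp
    simp only [auxF, hAm, hAs]
    rw [e1, e2]
  have hxst0 : 0 < xst := by
    rw [hxst]
    positivity
  have hTx : T xst = a/(a+b) := by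
    have hden : 0 < qm + qs*xst*R1 := by positivity
    simp only [hTdef]
    rw [div_eq_div_iff (ne_of_gt hden) (by positivity), hxst, hadef, hbdef]
    field_simp
    ring
  have hval : (1 - a/(a+b))/(a*(1 - a/(a+b))+1) + (a/(a+b))/(b*(a/(a+b))+1)
      = (a+b)/(a*b+a+b) := by
    have hab : 0 < a + b := by linarith
    have h1 : 1 - a/(a+b) = b/(a+b) := by field_simp; ring
    have hne : a*b + a + b ≠ 0 := by positivity
    rw [h1]
    field_simp
    ring
  have h01 := hT01 x hx
  calc auxF qm qs dm ds C km ks R1 R2 x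
      = (1 - T x)/(a*(1 - T x)+1) + T x/(b*T x+1) := hG x hx
    _ ≤ (a+b)/(a*b+a+b) := key_ineq a b (T x) ha hb h01.1 h01.2
    _ = (1 - a/(a+b))/(a*(1 - a/(a+b))+1) + (a/(a+b))/(b*(a/(a+b))+1) := hval.symm
    _ = (1 - T xst)/(a*(1 - T xst)+1) + T xst/(b*T xst+1) := by rw [hTx]
    _ = auxF qm qs dm ds C km ks R1 R2 xst := (hG xst hxst0).symm

set_option maxHeartbeats 1000000 in
lemma xstar_eq (α qm qs Pm Ps Qm Qs Bm Bs γm γs dm ds Cv : ℝ)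
    (hqm0 : 0 < qm) (hqm1 : qm < 1) (hqs0 : 0 < qs) (hqs1 : qs < 1)
    (hPm : 0 < Pm) (hPs : 0 < Ps) (hQm : 0 < Qm) (hQs : 0 < Qs)
    (hBm : 0 < Bm) (hBs : 0 < Bs) (hγm : 0 < γm) (hγs : 0 < γs)
    (hdm : 0 ≤ dm) (hds : 0 ≤ ds) (hCv : 0 < Cv) :
    (qm * Pm ^ (2 / α) * dm + (1 - qm) * (Qm * γm) ^ (2 / α) * Cv) /
        ((Bs / Bm) ^ (2 / α) *
          (qs * Ps ^ (2 / α) * ds + (1 - qs) * Cv * (Qs * γs) ^ (2 / α)))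
      = (qm * dm + (1-qm)*Cv*(((Qm/Pm)*γm) ^ (2/α))) /
        ((((Ps*Bs)/(Pm*Bm)) ^ (2/α)) *
          (qs * ds + (1-qs)*Cv*(((Qs/Ps)*γs) ^ (2/α)))) := by
  have hpm : 0 < Pm ^ (2/α) := Real.rpow_pos_of_pos hPm _
  have hps : 0 < Ps ^ (2/α) := Real.rpow_pos_of_pos hPs _
  have hbm : 0 < Bm ^ (2/α) := Real.rpow_pos_of_pos hBm _
  have hbs : 0 < Bs ^ (2/α) := Real.rpow_pos_of_pos hBs _
  have hkm : 0 < ((Qm/Pm)*γm) ^ (2/α) := Real.rpow_pos_of_pos (by positivity) _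
  have hks : 0 < ((Qs/Ps)*γs) ^ (2/α) := Real.rpow_pos_of_pos (by positivity) _
  have hqγm : 0 < (Qm*γm) ^ (2/α) := Real.rpow_pos_of_pos (by positivity) _
  have hqγs : 0 < (Qs*γs) ^ (2/α) := Real.rpow_pos_of_pos (by positivity) _
  have hBBpos : 0 < (Bs/Bm) ^ (2/α) := Real.rpow_pos_of_pos (by positivity) _
  have hPB1pos : 0 < ((Ps*Bs)/(Pm*Bm)) ^ (2/α) := Real.rpow_pos_of_pos (by positivity) _
  have hPB1 : ((Ps*Bs)/(Pm*Bm)) ^ (2/α)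
      = (Ps^(2/α)*Bs^(2/α))/(Pm^(2/α)*Bm^(2/α)) := by
    rw [Real.div_rpow (by positivity) (by positivity),
      Real.mul_rpow hPs.le hBs.le, Real.mul_rpow hPm.le hBm.le]
  have hBB : (Bs/Bm) ^ (2/α) = Bs^(2/α)/Bm^(2/α) :=
    Real.div_rpow hBs.le hBm.le _
  have hQPm : (Qm*γm) ^ (2/α) = ((Qm/Pm)*γm) ^ (2/α) * Pm ^ (2/α) := by
    rw [← Real.mul_rpow (by positivity) hPm.le]
    congr 1
    field_simp
  have hQPs : (Qs*γs) ^ (2/α) = ((Qs/Ps)*γs) ^ (2/α) * Ps ^ (2/α) := by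
    rw [← Real.mul_rpow (by positivity) hPs.le]
    congr 1
    field_simp
  have hdenL : 0 < (Bs / Bm) ^ (2 / α) *
      (qs * Ps ^ (2 / α) * ds + (1 - qs) * Cv * (Qs * γs) ^ (2 / α)) := by
    have h1 : 0 ≤ qs * Ps ^ (2/α) * ds := mul_nonneg (by positivity) hds
    have h2 : 0 < (1 - qs) * Cv * (Qs * γs) ^ (2/α) :=
      mul_pos (mul_pos (by linarith) hCv) hqγs
    exact mul_pos hBBpos (by linarith)
  have hdenR : 0 < (((Ps*Bs)/(Pm*Bm)) ^ (2/α)) *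
      (qs * ds + (1-qs)*Cv*(((Qs/Ps)*γs) ^ (2/α))) := by
    have h1 : 0 ≤ qs * ds := mul_nonneg hqs0.le hds
    have h2 : 0 < (1-qs)*Cv*(((Qs/Ps)*γs) ^ (2/α)) :=
      mul_pos (mul_pos (by linarith) hCv) hks
    exact mul_pos hPB1pos (by linarith)
  rw [div_eq_div_iff (ne_of_gt hdenL) (ne_of_gt hdenR), hQPm, hQPs, hBB, hPB1]
  field_simp

set_option maxHeartbeats 1000000 in
/-- In a fully-loaded two-tier dynamic TDD network, the overall DL coverage
`P̄_D(x) = A_m(x)P_m(x) + A_s(x)P_s(x)`, as a function of the density ratio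
`x = λ_s/λ_m`, is maximized at
`x* = (q_m P_m^{2/α}δ(γ_m,α) + (1-q_m)(Q_mγ_m)^{2/α}C(α)) /
     (B̂^{2/α}(q_s P_s^{2/α}δ(γ_s,α) + (1-q_s)C(α)(Q_sγ_s)^{2/α}))`. -/
theorem stmt15 (α qm qs Pm Ps Qm Qs Bm Bs γm γs : ℝ) (hα : 2 < α)
    (hqm : qm ∈ Set.Ioo (0:ℝ) 1) (hqs : qs ∈ Set.Ioo (0:ℝ) 1)
    (hPm : 0 < Pm) (hPs : 0 < Ps) (hQm : 0 < Qm) (hQs : 0 < Qs)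
    (hBm : 0 < Bm) (hBs : 0 < Bs) (hγm : 0 < γm) (hγs : 0 < γs) :
    let δ : ℝ → ℝ := fun γ =>
      ∫ u in Set.Ioi (γ ^ (-(2 / α))), γ ^ (2 / α) / (1 + u ^ (α / 2))
    let C : ℝ := (2 * π / α) / Real.sin (2 * π / α)
    let Am : ℝ → ℝ := fun x => qm / (qm + qs * x * ((Ps * Bs) / (Pm * Bm)) ^ (2 / α))
    let As : ℝ → ℝ := fun x => qs * x / (qs * x + qm * ((Pm * Bm) / (Ps * Bs)) ^ (2 / α))
    let covM : ℝ → ℝ := fun x =>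
      qm / (qm * Am x * δ γm + (1 - qm) * Am x * C * ((Qm / Pm) * γm) ^ (2 / α) + qm)
    let covS : ℝ → ℝ := fun x =>
      qs / (qs * As x * δ γs + (1 - qs) * As x * C * ((Qs / Ps) * γs) ^ (2 / α) + qs)
    let Pbar : ℝ → ℝ := fun x => Am x * covM x + As x * covS x
    let xstar : ℝ :=
      (qm * Pm ^ (2 / α) * δ γm + (1 - qm) * (Qm * γm) ^ (2 / α) * C) /
        ((Bs / Bm) ^ (2 / α) *
          (qs * Ps ^ (2 / α) * δ γs + (1 - qs) * C * (Qs * γs) ^ (2 / α)))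
    ∀ x : ℝ, 0 < x → Pbar x ≤ Pbar xstar := by
  intro δ C Am As covM covS Pbar xstar x hx
  obtain ⟨hqm0, hqm1⟩ := hqm
  obtain ⟨hqs0, hqs1⟩ := hqs
  have hα0 : (0:ℝ) < α := by linarith
  -- positivity of C
  have hC : 0 < C := by
    have h1 : 0 < 2*π/α := by positivity
    have h2 : 2*π/α < π := by
      rw [div_lt_iff₀ hα0]; nlinarith [Real.pi_pos]
    have hs := Real.sin_pos_of_pos_of_lt_pi h1 h2
    simp only [C]
    positivity
  -- nonnegativity of δ
  have hδm : 0 ≤ δ γm := by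
    simp only [δ]
    apply setIntegral_nonneg measurableSet_Ioi
    intro u hu
    have hu0 : 0 < u := lt_trans (Real.rpow_pos_of_pos hγm _) (Set.mem_Ioi.mp hu)
    positivity
  have hδs : 0 ≤ δ γs := by
    simp only [δ]
    apply setIntegral_nonneg measurableSet_Ioi
    intro u hu
    have hu0 : 0 < u := lt_trans (Real.rpow_pos_of_pos hγs _) (Set.mem_Ioi.mp hu)
    positivity
  have hkm : 0 < ((Qm/Pm)*γm) ^ (2/α) := Real.rpow_pos_of_pos (by positivity) _
  have hks : 0 < ((Qs/Ps)*γs) ^ (2/α) := Real.rpow_pos_of_pos (by positivity) _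
  have hR1 : 0 < ((Ps*Bs)/(Pm*Bm)) ^ (2/α) := Real.rpow_pos_of_pos (by positivity) _
  have hR12 : ((Ps*Bs)/(Pm*Bm)) ^ (2/α) * ((Pm*Bm)/(Ps*Bs)) ^ (2/α) = 1 := by
    rw [← Real.mul_rpow (by positivity) (by positivity)]
    rw [show (Ps*Bs)/(Pm*Bm) * ((Pm*Bm)/(Ps*Bs)) = 1 by field_simp]
    exact Real.one_rpow _
  have hxst : xstar = (qm * δ γm + (1-qm)*C*(((Qm/Pm)*γm) ^ (2/α))) /
      ((((Ps*Bs)/(Pm*Bm)) ^ (2/α)) *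
        (qs * δ γs + (1-qs)*C*(((Qs/Ps)*γs) ^ (2/α)))) :=
    xstar_eq α qm qs Pm Ps Qm Qs Bm Bs γm γs (δ γm) (δ γs) C
      hqm0 hqm1 hqs0 hqs1 hPm hPs hQm hQs hBm hBs hγm hγs hδm hδs hC
  exact aux qm qs (δ γm) (δ γs) C (((Qm/Pm)*γm) ^ (2/α)) (((Qs/Ps)*γs) ^ (2/α))
    (((Ps*Bs)/(Pm*Bm)) ^ (2/α)) (((Pm*Bm)/(Ps*Bs)) ^ (2/α)) xstar
    hqm0 hqm1 hqs0 hqs1 hδm hδs hC hkm hks hR1 hR12 hxst x hx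
end

section
/- Let Φ be a PPP of density λ on ℝ², let o be the origin and y₀ a point with ‖y₀‖ ≤ ι. The Laplace transform at s > 0 of I = Σ_{z∈Φ, z∉B(y₀,ι), ‖z‖≤‖y₀‖+ι} Q·h_z·‖z‖^{-α} (Exp(1) fading) equals exp(-2λ∫_0^π∫_{ℓ(θ)}^{ι+‖y₀‖} y/(1+y^α/(sQ)) dy dθ), where ℓ(θ) = √(ι² - (‖y₀‖ sin θ)²) + ‖y₀‖ cos θ. -/
open Real MeasureTheory Set

namespace Stmt18Aux

/-- The radial profile of the integrand. -/
noncomputable def phiFn (s Q α : ℝ) : ℝ → ℝ := fun r => 1 - 1 / (1 + s * Q * r ^ (-α))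

/-- integrand in polar coordinates -/
noncomputable def f2 (s Q α : ℝ) : ℝ × ℝ → ℝ := fun p => p.1 * phiFn s Q α p.1

/-- polar-coordinate condition set -/
def condSet (ι r₀ : ℝ) : Set (ℝ × ℝ) :=
  {p : ℝ × ℝ | ι ^ 2 < p.1 ^ 2 - 2 * p.1 * r₀ * Real.cos p.2 + r₀ ^ 2 ∧ p.1 ≤ r₀ + ι}

lemma measurable_phiFn (s Q α : ℝ) : Measurable (phiFn s Q α) := by
  unfold phiFn
  fun_prop

lemma measurable_f2 (s Q α : ℝ) : Measurable (f2 s Q α) := by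
  unfold f2
  exact measurable_fst.mul ((measurable_phiFn s Q α).comp measurable_fst)

lemma measurableSet_condSet (ι r₀ : ℝ) : MeasurableSet (condSet ι r₀) := by
  have h1 : Measurable fun p : ℝ × ℝ => p.1 ^ 2 - 2 * p.1 * r₀ * Real.cos p.2 + r₀ ^ 2 := by
    fun_prop
  exact (measurableSet_lt measurable_const h1).inter
    (measurableSet_le measurable_fst measurable_const)

variable {s Q ι α r₀ : ℝ}

lemma hD_nonneg (hι : 0 < ι) (hr0 : 0 ≤ r₀) (hy : r₀ ≤ ι) (θ : ℝ) :
    0 ≤ ι ^ 2 - (r₀ * Real.sin θ) ^ 2 := by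
  nlinarith [Real.sin_sq_le_one θ, sq_nonneg r₀, mul_self_le_mul_self hr0 hy,
    sq_nonneg (Real.sin θ)]

lemma hD2 (hι : 0 < ι) (hr0 : 0 ≤ r₀) (hy : r₀ ≤ ι) (θ : ℝ) :
    (r₀ * Real.cos θ) ^ 2 ≤ ι ^ 2 - (r₀ * Real.sin θ) ^ 2 := by
  nlinarith [Real.sin_sq_add_cos_sq θ, mul_self_le_mul_self hr0 hy]

lemma abs_le_sqrtD (hι : 0 < ι) (hr0 : 0 ≤ r₀) (hy : r₀ ≤ ι) (θ : ℝ) :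
    |r₀ * Real.cos θ| ≤ Real.sqrt (ι ^ 2 - (r₀ * Real.sin θ) ^ 2) := by
  rw [← Real.sqrt_sq_eq_abs]
  exact Real.sqrt_le_sqrt (hD2 hι hr0 hy θ)

lemma ell_nonneg (hι : 0 < ι) (hr0 : 0 ≤ r₀) (hy : r₀ ≤ ι) (θ : ℝ) :
    0 ≤ Real.sqrt (ι ^ 2 - (r₀ * Real.sin θ) ^ 2) + r₀ * Real.cos θ := by
  have h1 := abs_le_sqrtD hι hr0 hy θ
  have h2 := neg_abs_le (r₀ * Real.cos θ)
  linarith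

lemma ell_le (hι : 0 < ι) (hr0 : 0 ≤ r₀) (hy : r₀ ≤ ι) (θ : ℝ) :
    Real.sqrt (ι ^ 2 - (r₀ * Real.sin θ) ^ 2) + r₀ * Real.cos θ ≤ ι + r₀ := by
  have h1 : Real.sqrt (ι ^ 2 - (r₀ * Real.sin θ) ^ 2) ≤ ι := by
    have : Real.sqrt (ι ^ 2 - (r₀ * Real.sin θ) ^ 2) ≤ Real.sqrt (ι ^ 2) :=
      Real.sqrt_le_sqrt (by nlinarith [sq_nonneg (r₀ * Real.sin θ)])
    rwa [Real.sqrt_sq hι.le] at this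
  have h2 : r₀ * Real.cos θ ≤ r₀ := by
    nlinarith [Real.cos_le_one θ]
  linarith

lemma radial_set (hι : 0 < ι) (hr0 : 0 ≤ r₀) (hy : r₀ ≤ ι) (θ : ℝ) :
    Set.Ioi (0 : ℝ) ∩ {r : ℝ | (r, θ) ∈ condSet ι r₀}
      = Set.Ioc (Real.sqrt (ι ^ 2 - (r₀ * Real.sin θ) ^ 2) + r₀ * Real.cos θ) (ι + r₀) := by
  have hD := hD_nonneg hι hr0 hy θ
  have habs := abs_le_sqrtD hι hr0 hy θ
  have hsq : Real.sqrt (ι ^ 2 - (r₀ * Real.sin θ) ^ 2) ^ 2 = ι ^ 2 - (r₀ * Real.sin θ) ^ 2 :=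
    Real.sq_sqrt hD
  ext r
  simp only [condSet, mem_inter_iff, mem_Ioi, mem_setOf_eq, mem_Ioc]
  constructor
  · rintro ⟨hr, hq, hrb⟩
    constructor
    · have hrc : 0 < r - r₀ * Real.cos θ := by
        by_contra hcon
        push_neg at hcon
        nlinarith [Real.sin_sq_add_cos_sq θ, mul_self_le_mul_self hr0 hy]
      have : Real.sqrt (ι ^ 2 - (r₀ * Real.sin θ) ^ 2) < r - r₀ * Real.cos θ := by
        rw [Real.sqrt_lt' hrc]
        nlinarith [Real.sin_sq_add_cos_sq θ]
      linarith
    · linarith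
  · rintro ⟨hl, hrb⟩
    have hr : 0 < r := lt_of_le_of_lt (ell_nonneg hι hr0 hy θ) hl
    refine ⟨hr, ?_, by linarith⟩
    have hrc : 0 < r - r₀ * Real.cos θ := by
      have := Real.sqrt_nonneg (ι ^ 2 - (r₀ * Real.sin θ) ^ 2)
      linarith
    have h4 : ι ^ 2 - (r₀ * Real.sin θ) ^ 2 < (r - r₀ * Real.cos θ) ^ 2 :=
      (Real.sqrt_lt' hrc).mp (by linarith)
    nlinarith [Real.sin_sq_add_cos_sq θ]

lemma integrand_eq (hs : 0 < s) (hQ : 0 < Q) {r : ℝ} (hr : 0 < r) :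
    r * (1 - 1 / (1 + s * Q * r ^ (-α))) = r / (1 + r ^ α / (s * Q)) := by
  have h2 : 0 < r ^ α := Real.rpow_pos_of_pos hr α
  rw [Real.rpow_neg hr.le]
  have h3 : (0 : ℝ) < 1 + s * Q * (r ^ α)⁻¹ := by positivity
  have h4 : (0 : ℝ) < 1 + r ^ α / (s * Q) := by positivity
  field_simp
  ring

lemma inner_radial (hs : 0 < s) (hQ : 0 < Q) (hι : 0 < ι) (hr0 : 0 ≤ r₀) (hy : r₀ ≤ ι)
    (θ : ℝ) :
    (∫ r in Set.Ioi (0 : ℝ), (condSet ι r₀).indicator (f2 s Q α) (r, θ))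
      = ∫ y in (Real.sqrt (ι ^ 2 - (r₀ * Real.sin θ) ^ 2) + r₀ * Real.cos θ)..(ι + r₀),
          y / (1 + y ^ α / (s * Q)) := by
  have hmeas : MeasurableSet {r : ℝ | (r, θ) ∈ condSet ι r₀} :=
    (measurableSet_condSet ι r₀).preimage (by fun_prop)
  calc
    (∫ r in Set.Ioi (0 : ℝ), (condSet ι r₀).indicator (f2 s Q α) (r, θ))
        = ∫ r in Set.Ioi (0 : ℝ),
            Set.indicator {r : ℝ | (r, θ) ∈ condSet ι r₀} (fun r => f2 s Q α (r, θ)) r := by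
          refine setIntegral_congr_fun measurableSet_Ioi (fun r _ => ?_)
          by_cases h : (r, θ) ∈ condSet ι r₀ <;> simp [Set.indicator_apply, h]
    _ = ∫ r in Set.Ioi (0 : ℝ) ∩ {r : ℝ | (r, θ) ∈ condSet ι r₀}, f2 s Q α (r, θ) :=
          setIntegral_indicator hmeas
    _ = ∫ r in Set.Ioc (Real.sqrt (ι ^ 2 - (r₀ * Real.sin θ) ^ 2) + r₀ * Real.cos θ) (ι + r₀),
          f2 s Q α (r, θ) := by rw [radial_set hι hr0 hy θ]
    _ = ∫ r in Set.Ioc (Real.sqrt (ι ^ 2 - (r₀ * Real.sin θ) ^ 2) + r₀ * Real.cos θ) (ι + r₀),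
          r / (1 + r ^ α / (s * Q)) := by
          refine setIntegral_congr_fun measurableSet_Ioc (fun r hr => ?_)
          have hrpos : 0 < r := lt_of_le_of_lt (ell_nonneg hι hr0 hy θ) hr.1
          exact integrand_eq hs hQ hrpos
    _ = ∫ y in (Real.sqrt (ι ^ 2 - (r₀ * Real.sin θ) ^ 2) + r₀ * Real.cos θ)..(ι + r₀),
          y / (1 + y ^ α / (s * Q)) :=
          (intervalIntegral.integral_of_le (ell_le hι hr0 hy θ)).symm

lemma f2_integrableOn (hs : 0 < s) (hQ : 0 < Q) (hι : 0 < ι) (hr0 : 0 ≤ r₀) :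
    IntegrableOn (f2 s Q α) (Set.Ioc 0 (r₀ + ι) ×ˢ Set.Ioo (-π) π) := by
  have hK : MeasurableSet (Set.Ioc (0 : ℝ) (r₀ + ι) ×ˢ Set.Ioo (-π) π) :=
    measurableSet_Ioc.prod measurableSet_Ioo
  have hfin : volume (Set.Ioc (0 : ℝ) (r₀ + ι) ×ˢ Set.Ioo (-π) π) < ⊤ := by
    rw [Measure.volume_eq_prod, Measure.prod_prod]
    exact ENNReal.mul_lt_top measure_Ioc_lt_top measure_Ioo_lt_top
  refine Integrable.mono' (g := fun _ => r₀ + ι) (integrableOn_const hfin.ne)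
    ((measurable_f2 s Q α).aestronglyMeasurable) ?_
  rw [ae_restrict_iff' hK]
  filter_upwards with p hp
  obtain ⟨⟨hp1, hp2⟩, -⟩ := hp
  have hx : 0 ≤ s * Q * p.1 ^ (-α) :=
    mul_nonneg (mul_nonneg hs.le hQ.le) (Real.rpow_nonneg hp1.le _)
  have h1x : (0 : ℝ) < 1 + s * Q * p.1 ^ (-α) := by linarith
  have hφ0 : 0 ≤ phiFn s Q α p.1 := by
    have : 1 / (1 + s * Q * p.1 ^ (-α)) ≤ 1 := by
      rw [div_le_one h1x]; linarith
    unfold phiFn; linarith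
  have hφ1 : phiFn s Q α p.1 ≤ 1 := by
    have : 0 ≤ 1 / (1 + s * Q * p.1 ^ (-α)) := by positivity
    unfold phiFn; linarith
  have hb0 : 0 ≤ r₀ + ι := by linarith
  rw [Real.norm_eq_abs]
  have : |f2 s Q α p| = p.1 * phiFn s Q α p.1 := abs_of_nonneg (mul_nonneg hp1.le hφ0)
  rw [this]
  calc p.1 * phiFn s Q α p.1 ≤ (r₀ + ι) * 1 := by
        exact mul_le_mul hp2 hφ1 hφ0 hb0
    _ = r₀ + ι := mul_one _

lemma subset_K {t : Set ℝ} (ht : t ⊆ Set.Ioo (-π) π) :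
    (Set.Ioi 0 ×ˢ t) ∩ condSet ι r₀ ⊆ Set.Ioc 0 (r₀ + ι) ×ˢ Set.Ioo (-π) π := by
  rintro p ⟨⟨h1, h2⟩, hc1, hc2⟩
  exact ⟨⟨h1, hc2⟩, ht h2⟩

lemma aux_main (s Q ι α r₀ : ℝ) (hs : 0 < s) (hQ : 0 < Q) (hι : 0 < ι)
    (hr0 : 0 ≤ r₀) (hy : r₀ ≤ ι) :
    (∫ z in {z : EuclideanSpace ℝ (Fin 2) |
        ι < dist z (EuclideanSpace.single (0 : Fin 2) r₀) ∧ ‖z‖ ≤ r₀ + ι},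
      (1 - 1 / (1 + s * Q * ‖z‖ ^ (-α))))
    = 2 * ∫ θ in (0 : ℝ)..π,
        ∫ y in (Real.sqrt (ι ^ 2 - (r₀ * Real.sin θ) ^ 2) + r₀ * Real.cos θ)..(ι + r₀),
          y / (1 + y ^ α / (s * Q)) := by
  classical
  -- the measure-preserving identification of ℝ × ℝ with the Euclidean plane
  set T : (ℝ × ℝ) ≃ᵐ EuclideanSpace ℝ (Fin 2) :=
    (MeasurableEquiv.finTwoArrow.symm).trans (MeasurableEquiv.toLp 2 (Fin 2 → ℝ))
    with hTdef
  have hT : MeasurePreserving T := by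
    exact ((EuclideanSpace.volume_preserving_symm_measurableEquiv_toLp (Fin 2)).symm).comp
      ((volume_preserving_finTwoArrow ℝ).symm)
  have hT0 : ∀ p : ℝ × ℝ, (T p) 0 = p.1 := fun p => rfl
  have hT1 : ∀ p : ℝ × ℝ, (T p) 1 = p.2 := fun p => rfl
  have hnorm : ∀ p : ℝ × ℝ, ‖T p‖ = Real.sqrt (p.1 ^ 2 + p.2 ^ 2) := by
    intro p
    rw [EuclideanSpace.norm_eq, Fin.sum_univ_two, hT0 p, hT1 p]
    simp [Real.norm_eq_abs, sq_abs]
  have hdist : ∀ p : ℝ × ℝ,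
      dist (T p) (EuclideanSpace.single (0 : Fin 2) r₀)
        = Real.sqrt ((p.1 - r₀) ^ 2 + p.2 ^ 2) := by
    intro p
    rw [EuclideanSpace.dist_eq, Fin.sum_univ_two, hT0 p, hT1 p]
    simp [EuclideanSpace.single_apply, Real.dist_eq, sq_abs]
  set S : Set (ℝ × ℝ) :=
    {p : ℝ × ℝ | ι < Real.sqrt ((p.1 - r₀) ^ 2 + p.2 ^ 2)
      ∧ Real.sqrt (p.1 ^ 2 + p.2 ^ 2) ≤ r₀ + ι} with hSdef
  have hSmeas : MeasurableSet S := by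
    refine MeasurableSet.inter ?_ ?_
    · exact measurableSet_lt measurable_const
        ((Real.continuous_sqrt.comp
          (((continuous_fst.sub continuous_const).pow 2).add (continuous_snd.pow 2))).measurable)
    · exact measurableSet_le
        ((Real.continuous_sqrt.comp
          ((continuous_fst.pow 2).add (continuous_snd.pow 2))).measurable) measurable_const
  set hfun : ℝ × ℝ → ℝ :=
    fun p => 1 - 1 / (1 + s * Q * (Real.sqrt (p.1 ^ 2 + p.2 ^ 2)) ^ (-α)) with hfundef
  have step2 : (∫ z in {z : EuclideanSpace ℝ (Fin 2) |
        ι < dist z (EuclideanSpace.single (0 : Fin 2) r₀) ∧ ‖z‖ ≤ r₀ + ι},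
      (1 - 1 / (1 + s * Q * ‖z‖ ^ (-α)))) = ∫ p in S, hfun p := by
    rw [← hT.setIntegral_preimage_emb T.measurableEmbedding
      (fun z => (1 - 1 / (1 + s * Q * ‖z‖ ^ (-α)))) _]
    have hpre : T ⁻¹' {z : EuclideanSpace ℝ (Fin 2) |
        ι < dist z (EuclideanSpace.single (0 : Fin 2) r₀) ∧ ‖z‖ ≤ r₀ + ι} = S := by
      ext p
      simp only [mem_preimage, mem_setOf_eq, hdist p, hnorm p, hSdef]
    rw [hpre]
    refine setIntegral_congr_fun hSmeas (fun p _ => ?_)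
    rw [hnorm p]
  -- polar coordinates
  have hcond := measurableSet_condSet ι r₀
  have step3 : (∫ p in S, hfun p)
      = ∫ p in polarCoord.target, (condSet ι r₀).indicator (f2 s Q α) p := by
    rw [← integral_indicator hSmeas, ← integral_comp_polarCoord_symm (S.indicator hfun)]
    refine setIntegral_congr_fun polarCoord.open_target.measurableSet (fun p hp => ?_)
    have hp1 : 0 < p.1 := hp.1
    have hsymm : polarCoord.symm p = (p.1 * Real.cos p.2, p.1 * Real.sin p.2) := rfl
    have key1 : (p.1 * Real.cos p.2) ^ 2 + (p.1 * Real.sin p.2) ^ 2 = p.1 ^ 2 := by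
      nlinarith [Real.sin_sq_add_cos_sq p.2]
    have sqrtkey : Real.sqrt ((p.1 * Real.cos p.2) ^ 2 + (p.1 * Real.sin p.2) ^ 2) = p.1 := by
      rw [key1, Real.sqrt_sq hp1.le]
    have key2 : (p.1 * Real.cos p.2 - r₀) ^ 2 + (p.1 * Real.sin p.2) ^ 2
        = p.1 ^ 2 - 2 * p.1 * r₀ * Real.cos p.2 + r₀ ^ 2 := by
      nlinarith [Real.sin_sq_add_cos_sq p.2]
    have hmem : polarCoord.symm p ∈ S ↔ p ∈ condSet ι r₀ := by
      rw [hsymm]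
      simp only [hSdef, condSet, mem_setOf_eq, key2, sqrtkey]
      constructor
      · rintro ⟨h1, h2⟩
        exact ⟨(Real.lt_sqrt hι.le).mp h1, h2⟩
      · rintro ⟨h1, h2⟩
        exact ⟨(Real.lt_sqrt hι.le).mpr h1, h2⟩
    by_cases hmem2 : p ∈ condSet ι r₀
    · rw [Set.indicator_of_mem (hmem.mpr hmem2), Set.indicator_of_mem hmem2]
      rw [hsymm]
      simp only [hfundef, f2, phiFn, sqrtkey]
      rw [smul_eq_mul]
    · rw [Set.indicator_of_notMem (fun h => hmem2 (hmem.mp h)),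
        Set.indicator_of_notMem hmem2, smul_zero]
  -- split the target and use the symmetry θ ↦ -θ
  have htarget : polarCoord.target = Set.Ioi (0 : ℝ) ×ˢ Set.Ioo (-π) π := rfl
  have hIntP : ∀ t : Set ℝ, MeasurableSet t → t ⊆ Set.Ioo (-π) π →
      IntegrableOn (f2 s Q α) ((Set.Ioi 0 ×ˢ t) ∩ condSet ι r₀) := by
    intro t ht hsub
    exact (f2_integrableOn hs hQ hι hr0 (α := α)).mono_set (subset_K hsub)
  have hsplit : (Set.Ioi (0 : ℝ) ×ˢ Set.Ioo (-π) π) ∩ condSet ι r₀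
      = ((Set.Ioi 0 ×ˢ Set.Ioo (-π) 0) ∩ condSet ι r₀)
        ∪ ((Set.Ioi 0 ×ˢ Set.Ico 0 π) ∩ condSet ι r₀) := by
    rw [show Set.Ioo (-π) π = Set.Ioo (-π) 0 ∪ Set.Ico 0 π from
      (Set.Ioo_union_Ico_eq_Ioo (by linarith [Real.pi_pos]) Real.pi_pos.le).symm,
      Set.prod_union, Set.union_inter_distrib_right]
  have hdisj : Disjoint ((Set.Ioi (0:ℝ) ×ˢ Set.Ioo (-π) 0) ∩ condSet ι r₀)
      ((Set.Ioi 0 ×ˢ Set.Ico 0 π) ∩ condSet ι r₀) := by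
    rw [Set.disjoint_left]
    rintro p ⟨⟨-, h1⟩, -⟩ ⟨⟨-, h2⟩, -⟩
    exact absurd h2.1 (not_le.mpr h1.2)
  -- the θ ↦ -θ symmetry
  set N : (ℝ × ℝ) ≃ᵐ (ℝ × ℝ) :=
    (MeasurableEquiv.refl ℝ).prodCongr (Homeomorph.neg ℝ).toMeasurableEquiv with hNdef
  have hN : MeasurePreserving N :=
    (MeasurePreserving.id _).prod (Measure.measurePreserving_neg _)
  have hNapp : ∀ p : ℝ × ℝ, N p = (p.1, -p.2) := fun p => rfl
  have hneg : (∫ p in (Set.Ioi (0:ℝ) ×ˢ Set.Ioo (-π) 0) ∩ condSet ι r₀, f2 s Q α p)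
      = ∫ p in (Set.Ioi (0:ℝ) ×ˢ Set.Ioo 0 π) ∩ condSet ι r₀, f2 s Q α p := by
    rw [← hN.setIntegral_preimage_emb N.measurableEmbedding (f2 s Q α) _]
    have hpre : N ⁻¹' ((Set.Ioi (0:ℝ) ×ˢ Set.Ioo (-π) 0) ∩ condSet ι r₀)
        = (Set.Ioi (0:ℝ) ×ˢ Set.Ioo 0 π) ∩ condSet ι r₀ := by
      ext p
      simp only [mem_preimage, hNapp p, mem_inter_iff, mem_prod, mem_Ioi, mem_Ioo,
        condSet, mem_setOf_eq, Real.cos_neg]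
      constructor
      · rintro ⟨⟨h1, h2, h3⟩, h4, h5⟩
        exact ⟨⟨h1, by linarith, by linarith⟩, h4, h5⟩
      · rintro ⟨⟨h1, h2, h3⟩, h4, h5⟩
        exact ⟨⟨h1, by linarith, by linarith⟩, h4, h5⟩
    rw [hpre]
    refine setIntegral_congr_fun
      ((measurableSet_Ioi.prod measurableSet_Ioo).inter hcond) (fun p _ => ?_)
    simp only [hNapp p, f2]
  have hIco : (∫ p in (Set.Ioi (0:ℝ) ×ˢ Set.Ico 0 π) ∩ condSet ι r₀, f2 s Q α p)
      = ∫ p in (Set.Ioi (0:ℝ) ×ˢ Set.Ioo 0 π) ∩ condSet ι r₀, f2 s Q α p := by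
    refine setIntegral_congr_set ?_
    have hnull : volume ((univ : Set ℝ) ×ˢ ({0} : Set ℝ)) = 0 := by
      rw [Measure.volume_eq_prod, Measure.prod_prod]
      simp
    rw [MeasureTheory.ae_eq_set]
    constructor
    · refine measure_mono_null ?_ hnull
      rintro p ⟨⟨⟨hp1, hp2⟩, hpc⟩, hnp⟩
      have : p.2 = 0 := by
        by_contra h
        exact hnp ⟨⟨hp1, lt_of_le_of_ne hp2.1 (Ne.symm h), hp2.2⟩, hpc⟩
      exact ⟨trivial, this⟩
    · refine measure_mono_null ?_ hnull
      rintro p ⟨⟨⟨hp1, hp2⟩, hpc⟩, hnp⟩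
      exact absurd ⟨⟨hp1, hp2.1.le, hp2.2⟩, hpc⟩ hnp
  -- Fubini on the positive-angle piece
  have hind : Integrable ((condSet ι r₀).indicator (f2 s Q α))
      (volume.restrict (Set.Ioi (0:ℝ) ×ˢ Set.Ioo 0 π)) := by
    rw [integrable_indicator_iff hcond, IntegrableOn, Measure.restrict_restrict hcond,
      Set.inter_comm]
    exact hIntP _ measurableSet_Ioo (Set.Ioo_subset_Ioo_left (by linarith [Real.pi_pos]))
  have hfub : (∫ p in (Set.Ioi (0:ℝ) ×ˢ Set.Ioo 0 π) ∩ condSet ι r₀, f2 s Q α p)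
      = ∫ θ in Set.Ioo (0:ℝ) π, ∫ r in Set.Ioi (0:ℝ),
          (condSet ι r₀).indicator (f2 s Q α) (r, θ) := by
    rw [← setIntegral_indicator hcond]
    have h1 : (∫ x in Set.Ioi (0:ℝ) ×ˢ Set.Ioo (0:ℝ) π, (condSet ι r₀).indicator (f2 s Q α) x)
        = ∫ r in Set.Ioi (0:ℝ), ∫ θ in Set.Ioo (0:ℝ) π,
            (condSet ι r₀).indicator (f2 s Q α) (r, θ) :=
      setIntegral_prod _ hind
    rw [h1]
    refine integral_integral_swap ?_
    rw [Measure.prod_restrict]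
    exact hind
  have hinner : (∫ θ in Set.Ioo (0:ℝ) π, ∫ r in Set.Ioi (0:ℝ),
        (condSet ι r₀).indicator (f2 s Q α) (r, θ))
      = ∫ θ in Set.Ioo (0:ℝ) π,
          ∫ y in (Real.sqrt (ι ^ 2 - (r₀ * Real.sin θ) ^ 2) + r₀ * Real.cos θ)..(ι + r₀),
            y / (1 + y ^ α / (s * Q)) := by
    refine setIntegral_congr_fun measurableSet_Ioo (fun θ _ => ?_)
    exact inner_radial hs hQ hι hr0 hy θ
  have houter : (∫ θ in Set.Ioo (0:ℝ) π,
        ∫ y in (Real.sqrt (ι ^ 2 - (r₀ * Real.sin θ) ^ 2) + r₀ * Real.cos θ)..(ι + r₀),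
          y / (1 + y ^ α / (s * Q)))
      = ∫ θ in (0:ℝ)..π,
          ∫ y in (Real.sqrt (ι ^ 2 - (r₀ * Real.sin θ) ^ 2) + r₀ * Real.cos θ)..(ι + r₀),
            y / (1 + y ^ α / (s * Q)) := by
    rw [intervalIntegral.integral_of_le Real.pi_pos.le]
    exact setIntegral_congr_set Ioo_ae_eq_Ioc
  calc (∫ z in {z : EuclideanSpace ℝ (Fin 2) |
        ι < dist z (EuclideanSpace.single (0 : Fin 2) r₀) ∧ ‖z‖ ≤ r₀ + ι},
      (1 - 1 / (1 + s * Q * ‖z‖ ^ (-α))))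
      = ∫ p in polarCoord.target, (condSet ι r₀).indicator (f2 s Q α) p := by
        rw [step2, step3]
    _ = ∫ p in (Set.Ioi (0:ℝ) ×ˢ Set.Ioo (-π) π) ∩ condSet ι r₀, f2 s Q α p := by
        rw [htarget, setIntegral_indicator hcond]
    _ = (∫ p in (Set.Ioi (0:ℝ) ×ˢ Set.Ioo (-π) 0) ∩ condSet ι r₀, f2 s Q α p)
        + ∫ p in (Set.Ioi (0:ℝ) ×ˢ Set.Ico 0 π) ∩ condSet ι r₀, f2 s Q α p := by
        rw [hsplit]
        exact setIntegral_union hdisj ((measurableSet_Ioi.prod measurableSet_Ico).inter hcond)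
          (hIntP _ measurableSet_Ioo (Set.Ioo_subset_Ioo_right Real.pi_pos.le))
          (hIntP _ measurableSet_Ico (fun x hx => ⟨by linarith [Real.pi_pos, hx.1], hx.2⟩))
    _ = 2 * ∫ p in (Set.Ioi (0:ℝ) ×ˢ Set.Ioo 0 π) ∩ condSet ι r₀, f2 s Q α p := by
        rw [hneg, hIco]; ring
    _ = 2 * ∫ θ in (0:ℝ)..π,
          ∫ y in (Real.sqrt (ι ^ 2 - (r₀ * Real.sin θ) ^ 2) + r₀ * Real.cos θ)..(ι + r₀),
            y / (1 + y ^ α / (s * Q)) := by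
        rw [hfub, hinner, houter]

end Stmt18Aux

/-- Inner-region Laplace transform (case `‖y₀‖ ≤ ι`): by the PGFL, the Laplace
transform of the interference from PPP points in `B(0,‖y₀‖+ι) \ B(y₀,ι)` equals
`exp(-2λ∫_0^π∫_{ℓ(θ)}^{ι+‖y₀‖} y/(1+y^α/(sQ)) dy dθ)` with
`ℓ(θ) = √(ι² - (‖y₀‖sin θ)²) + ‖y₀‖cos θ`. -/
theorem stmt18 (lam s Q ι α : ℝ) (y₀ : EuclideanSpace ℝ (Fin 2))
    (hlam : 0 < lam) (hs : 0 < s) (hQ : 0 < Q) (hι : 0 < ι) (hα : 2 < α)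
    (hy : ‖y₀‖ ≤ ι) :
    Real.exp (-lam *
        ∫ z in {z : EuclideanSpace ℝ (Fin 2) | ι < dist z y₀ ∧ ‖z‖ ≤ ‖y₀‖ + ι},
          (1 - 1 / (1 + s * Q * ‖z‖ ^ (-α))))
      = Real.exp (-2 * lam *
          ∫ θ in (0:ℝ)..π,
            ∫ y in (Real.sqrt (ι ^ 2 - (‖y₀‖ * Real.sin θ) ^ 2) + ‖y₀‖ * Real.cos θ)..(ι + ‖y₀‖),
              y / (1 + y ^ α / (s * Q))) := by
  have hr0 : 0 ≤ ‖y₀‖ := norm_nonneg y₀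
  set u : EuclideanSpace ℝ (Fin 2) := EuclideanSpace.single (0 : Fin 2) ‖y₀‖ with hu
  have hnu : ‖u‖ = ‖y₀‖ := by
    rw [hu, EuclideanSpace.norm_single, Real.norm_eq_abs, abs_of_nonneg hr0]
  set e : EuclideanSpace ℝ (Fin 2) ≃ₗᵢ[ℝ] EuclideanSpace ℝ (Fin 2) :=
    Submodule.reflection (ℝ ∙ (u - y₀))ᗮ with he
  have heu : e u = y₀ := Submodule.reflection_sub hnu
  have hmp : MeasurePreserving e := e.measurePreserving
  have hemb : MeasurableEmbedding e := e.toHomeomorph.measurableEmbedding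
  have hrot : (∫ z in {z : EuclideanSpace ℝ (Fin 2) | ι < dist z y₀ ∧ ‖z‖ ≤ ‖y₀‖ + ι},
        (1 - 1 / (1 + s * Q * ‖z‖ ^ (-α))))
      = ∫ z in {z : EuclideanSpace ℝ (Fin 2) | ι < dist z u ∧ ‖z‖ ≤ ‖y₀‖ + ι},
        (1 - 1 / (1 + s * Q * ‖z‖ ^ (-α))) := by
    rw [← hmp.setIntegral_preimage_emb hemb
      (fun z => (1 - 1 / (1 + s * Q * ‖z‖ ^ (-α)))) _]
    have hpre : e ⁻¹' {z : EuclideanSpace ℝ (Fin 2) | ι < dist z y₀ ∧ ‖z‖ ≤ ‖y₀‖ + ι}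
        = {z : EuclideanSpace ℝ (Fin 2) | ι < dist z u ∧ ‖z‖ ≤ ‖y₀‖ + ι} := by
      ext z
      simp only [mem_preimage, mem_setOf_eq]
      rw [← heu, e.dist_map, e.norm_map]
    rw [hpre]
    refine setIntegral_congr_fun ?_ (fun z _ => by rw [e.norm_map]) 
    refine MeasurableSet.inter ?_ ?_
    · exact measurableSet_lt measurable_const (continuous_id.dist continuous_const).measurable
    · exact measurableSet_le continuous_norm.measurable measurable_const
  rw [hrot, Stmt18Aux.aux_main s Q ι α ‖y₀‖ hs hQ hι hr0 hy]
  congr 1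
  ring
end
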